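/- arXiv:0804.3860 — 2 statements merged into one kernel-verified Lean document; each statement's English description precedes it below -/
import Mathlib

section
/- There is an absolute constant C > 0 such that the following holds. Let n be a positive integer and let k be a real number with n^{1/2} ≤ k ≤ n. Suppose x, z : {1,…,n} × {1,…,n} → ℝ satisfy: (1) x(i,j) ≤ 0 for all 1 ≤ i ≤ n and 1 ≤ j ≤ i; (2) x(i,j) ≤ n for all 1 ≤ i ≤ n and i < j ≤ n; (3) for every 1 ≤ i ≤ n, (∑_{j > i} x(i,j)) − (∑_{j < i} x(j,i)) ≤ n; (4) z(i,j) ≤ k for all i, j; (5) z(i,j) ≤ x(i,j) for all i, j; (6) 0 ≤ z(i,j) for all i, j; (7) 0 ≤ x(i,j) for all i, j. Then ∑_{1 ≤ i, j ≤ n} z(i,j) ≤ C · n² · √k. -/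
open Finset

private lemma nat_lt_div_succ_mul (a b : ℕ) (h : 0 < b) : a < (a / b + 1) * b :=
  calc a = b * (a / b) + a % b := (Nat.div_add_mod a b).symm
    _ < b * (a / b) + b := by have := Nat.mod_lt a h; omega
    _ = (a / b + 1) * b := by ring

private lemma tri_swap (m : ℕ) (f : ℕ → ℕ → ℝ) :
    ∑ i ∈ Icc 1 m, ∑ j ∈ Ioc i m, f i j = ∑ i ∈ Icc 1 m, ∑ j ∈ Ico 1 i, f j i := by
  have h1 : ∀ a b : ℕ, Icc a b = Ico a (b+1) := fun a b => by rw [Finset.Ico_add_one_right_eq_Icc]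
  have h2 : ∀ a b : ℕ, Ioc a b = Ico (a+1) (b+1) := fun a b => by
    ext x; simp only [mem_Ioc, mem_Ico]; omega
  simp only [h1, h2]
  exact Finset.sum_Ico_Ico_comm' 1 (m+1) f

/-- There is an absolute constant `C > 0` such that for every positive integer `n` and
every real `k` with `√n ≤ k ≤ n`, any functions `x z : {1,…,n}² → ℝ` satisfying the
linear constraints (1)–(7) of the LP have `∑ z(i,j) ≤ C · n² · √k`. -/
theorem lp_bound :
    ∃ C : ℝ, 0 < C ∧
      ∀ (n : ℕ), 0 < n →
      ∀ (k : ℝ), Real.sqrt n ≤ k → k ≤ n →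
      ∀ (x z : ℕ → ℕ → ℝ),
        (∀ i ∈ Finset.Icc 1 n, ∀ j ∈ Finset.Icc 1 i, x i j ≤ 0) →
        (∀ i ∈ Finset.Icc 1 n, ∀ j, i < j → j ≤ n → x i j ≤ n) →
        (∀ i ∈ Finset.Icc 1 n,
          (∑ j ∈ Finset.Ioc i n, x i j) - (∑ j ∈ Finset.Ico 1 i, x j i) ≤ n) →
        (∀ i ∈ Finset.Icc 1 n, ∀ j ∈ Finset.Icc 1 n, z i j ≤ k) →
        (∀ i ∈ Finset.Icc 1 n, ∀ j ∈ Finset.Icc 1 n, z i j ≤ x i j) →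
        (∀ i ∈ Finset.Icc 1 n, ∀ j ∈ Finset.Icc 1 n, 0 ≤ z i j) →
        (∀ i ∈ Finset.Icc 1 n, ∀ j ∈ Finset.Icc 1 n, 0 ≤ x i j) →
        (∑ i ∈ Finset.Icc 1 n, ∑ j ∈ Finset.Icc 1 n, z i j) ≤
          C * (n : ℝ) ^ 2 * Real.sqrt k := by
  refine ⟨3, by norm_num, ?_⟩
  intro n hn k hk1 hk2 x z h1 h2 h3 h4 h5 h6 h7
  set s := Real.sqrt k with hs
  have hn1 : (1:ℝ) ≤ (n:ℝ) := by exact_mod_cast hn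
  have hk1' : (1:ℝ) ≤ k := le_trans (by
    rw [show (1:ℝ) = Real.sqrt 1 by simp]
    exact Real.sqrt_le_sqrt hn1) hk1
  have hk0 : (0:ℝ) ≤ k := by linarith
  have hs1 : 1 ≤ s := by
    rw [hs, show (1:ℝ) = Real.sqrt 1 by simp]
    exact Real.sqrt_le_sqrt hk1'
  have hs0 : 0 < s := lt_of_lt_of_le one_pos hs1
  have hss : s * s = k := Real.mul_self_sqrt hk0
  have hsn : s ≤ (n:ℝ) := by
    nlinarith [hk2, hn1, hss, hs1]
  -- the threshold t
  set t : ℕ := ⌈(n:ℝ)/s⌉₊ with htdef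
  have hns1 : (1:ℝ) ≤ (n:ℝ)/s := (le_div_iff₀ hs0).mpr (by linarith)
  have htr : (n:ℝ)/s ≤ (t:ℝ) := Nat.le_ceil _
  have ht1 : 1 ≤ t := by
    have : (0:ℝ) < (n:ℝ)/s := by linarith
    exact Nat.one_le_iff_ne_zero.mpr (by positivity)
  have ht0 : 0 < t := ht1
  have htub : (t:ℝ) ≤ 2*(n:ℝ)/s := by
    have h := Nat.ceil_lt_add_one (le_of_lt (lt_of_lt_of_le one_pos hns1))
    have : (t:ℝ) < (n:ℝ)/s + 1 := h
    calc (t:ℝ) ≤ (n:ℝ)/s + 1 := le_of_lt this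
      _ ≤ (n:ℝ)/s + (n:ℝ)/s := by linarith
      _ = 2*(n:ℝ)/s := by ring
  -- number of cut points
  set Q : ℕ := n / t with hQdef
  have hQt : Q * t ≤ n := Nat.div_mul_le_self n t
  have hQs : (Q:ℝ) ≤ s := by
    have h1' : ((n / t : ℕ) : ℝ) ≤ (n:ℝ)/(t:ℝ) := Nat.cast_div_le
    have ht0' : (0:ℝ) < (t:ℝ) := by exact_mod_cast ht0
    have h2' : (n:ℝ)/(t:ℝ) ≤ (n:ℝ)/((n:ℝ)/s) := by
      apply div_le_div_of_nonneg_left (by linarith) (by linarith) htr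
    have h3' : (n:ℝ)/((n:ℝ)/s) = s := by
      field_simp
    rw [hQdef]; rw [h3'] at h2'; linarith
  -- cut bound: for each m ∈ [1,n], the sum of x over the cut at m is ≤ m·n
  have hcut : ∀ m ∈ Icc 1 n, ∑ i ∈ Icc 1 m, ∑ j ∈ Ioc m n, x i j ≤ (m:ℝ) * n := by
    intro m hm
    obtain ⟨hm1, hmn⟩ := mem_Icc.mp hm
    have hsub : Icc 1 m ⊆ Icc 1 n := Icc_subset_Icc_right hmn
    have hsum : ∑ i ∈ Icc 1 m, ((∑ j ∈ Ioc i n, x i j) - ∑ j ∈ Ico 1 i, x j i)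
        ≤ (m:ℝ) * n := by
      calc ∑ i ∈ Icc 1 m, ((∑ j ∈ Ioc i n, x i j) - ∑ j ∈ Ico 1 i, x j i)
          ≤ ∑ _i ∈ Icc 1 m, (n:ℝ) := sum_le_sum (fun i hi => h3 i (hsub hi))
        _ = (m:ℝ) * n := by
            rw [sum_const, Nat.card_Icc]
            simp [nsmul_eq_mul]
    have hsplit : ∀ i ∈ Icc 1 m,
        ∑ j ∈ Ioc i n, x i j = ∑ j ∈ Ioc i m, x i j + ∑ j ∈ Ioc m n, x i j := by
      intro i hi
      exact (Finset.sum_Ioc_consecutive _ (mem_Icc.mp hi).2 hmn).symm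
    have e1 : ∑ i ∈ Icc 1 m, ((∑ j ∈ Ioc i n, x i j) - ∑ j ∈ Ico 1 i, x j i)
        = ∑ i ∈ Icc 1 m, ∑ j ∈ Ioc m n, x i j := by
      rw [Finset.sum_sub_distrib, Finset.sum_congr rfl hsplit, Finset.sum_add_distrib,
        tri_swap m x]
      ring
    rw [e1] at hsum
    exact hsum
  -- pointwise bound
  have hpt : ∀ i ∈ Icc 1 n, ∀ j ∈ Icc 1 n,
      z i j ≤ (if i < j ∧ j ≤ i + t then k else 0) + (if i + t < j then x i j else 0) := by
    intro i hi j hj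
    by_cases hfar : i + t < j
    · have hnear : ¬(i < j ∧ j ≤ i + t) := by omega
      simp only [if_pos hfar, if_neg hnear]
      have := h5 i hi j hj
      linarith
    · simp only [if_neg hfar]
      by_cases hnear : i < j ∧ j ≤ i + t
      · simp only [if_pos hnear]
        have := h4 i hi j hj
        linarith
      · simp only [if_neg hnear]
        have hji : j ≤ i := by omega
        have hx0 : x i j ≤ 0 := h1 i hi j (mem_Icc.mpr ⟨(mem_Icc.mp hj).1, hji⟩)
        have := h5 i hi j hj
        linarith
  -- split the total sum
  have hmain : (∑ i ∈ Icc 1 n, ∑ j ∈ Icc 1 n, z i j)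
      ≤ (∑ i ∈ Icc 1 n, ∑ j ∈ Icc 1 n, (if i < j ∧ j ≤ i + t then k else 0))
        + ∑ i ∈ Icc 1 n, ∑ j ∈ Icc 1 n, (if i + t < j then x i j else 0) := by
    rw [← Finset.sum_add_distrib]
    apply sum_le_sum
    intro i hi
    rw [← Finset.sum_add_distrib]
    exact sum_le_sum (fun j hj => hpt i hi j hj)
  -- near part
  have hnear : (∑ i ∈ Icc 1 n, ∑ j ∈ Icc 1 n, (if i < j ∧ j ≤ i + t then k else 0))
      ≤ (n:ℝ) * ((t:ℝ) * k) := by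
    have hrow : ∀ i ∈ Icc 1 n,
        (∑ j ∈ Icc 1 n, (if i < j ∧ j ≤ i + t then k else 0)) ≤ (t:ℝ) * k := by
      intro i _
      rw [← Finset.sum_filter]
      have hsub : (Icc 1 n).filter (fun j => i < j ∧ j ≤ i + t) ⊆ Ioc i (i + t) := by
        intro j hj
        simp only [mem_filter, mem_Icc] at hj
        exact mem_Ioc.mpr ⟨hj.2.1, hj.2.2⟩
      have hcard : ((Icc 1 n).filter (fun j => i < j ∧ j ≤ i + t)).card ≤ t := by
        calc ((Icc 1 n).filter (fun j => i < j ∧ j ≤ i + t)).card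
            ≤ (Ioc i (i + t)).card := card_le_card hsub
          _ = t := by rw [Nat.card_Ioc]; omega
      rw [Finset.sum_const]
      calc (((Icc 1 n).filter (fun j => i < j ∧ j ≤ i + t)).card : ℕ) • k
          = (((Icc 1 n).filter (fun j => i < j ∧ j ≤ i + t)).card : ℝ) * k := by
            rw [nsmul_eq_mul]
        _ ≤ (t:ℝ) * k := by
            apply mul_le_mul_of_nonneg_right _ hk0
            exact_mod_cast hcard
    calc (∑ i ∈ Icc 1 n, ∑ j ∈ Icc 1 n, (if i < j ∧ j ≤ i + t then k else 0))
        ≤ ∑ _i ∈ Icc 1 n, (t:ℝ) * k := sum_le_sum hrow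
      _ = (n:ℝ) * ((t:ℝ) * k) := by
          rw [sum_const, Nat.card_Icc]
          simp [nsmul_eq_mul]
  -- far part
  have hfar : (∑ i ∈ Icc 1 n, ∑ j ∈ Icc 1 n, (if i + t < j then x i j else 0))
      ≤ (Q:ℝ) * ((n:ℝ) * n) := by
    set P : Finset (ℕ × ℕ) := Icc 1 n ×ˢ Icc 1 n with hP
    set F : Finset (ℕ × ℕ) := P.filter (fun p => p.1 + t < p.2) with hF
    set g : ℕ × ℕ → ℕ := fun p => (p.1 + t - 1) / t with hg
    have hqfacts : ∀ p ∈ F, p.1 ≤ g p * t ∧ g p * t < p.2 ∧ 1 ≤ g p ∧ g p ≤ Q := by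
      intro p hp
      simp only [hF, mem_filter, hP, mem_product, mem_Icc] at hp
      obtain ⟨⟨⟨hi1, hin⟩, hj1, hjn⟩, hfar'⟩ := hp
      have hub : g p * t ≤ p.1 + t - 1 := Nat.div_mul_le_self _ _
      have hlb : p.1 + t - 1 < (g p + 1) * t := nat_lt_div_succ_mul _ _ ht0
      have h1' : p.1 ≤ g p * t := by
        have : (g p + 1) * t = g p * t + t := by ring
        omega
      have h2' : g p * t < p.2 := by omega
      have h3' : 1 ≤ g p := (Nat.one_le_div_iff ht0).mpr (by omega)
      have h4' : g p ≤ Q := by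
        rw [hQdef]
        exact Nat.le_div_iff_mul_le ht0 |>.mpr (by omega)
      exact ⟨h1', h2', h3', h4'⟩
    have hmaps : ∀ p ∈ F, g p ∈ Icc 1 Q := by
      intro p hp
      obtain ⟨_, _, h3', h4'⟩ := hqfacts p hp
      exact mem_Icc.mpr ⟨h3', h4'⟩
    have e2 : (∑ i ∈ Icc 1 n, ∑ j ∈ Icc 1 n, (if i + t < j then x i j else 0))
        = ∑ p ∈ F, x p.1 p.2 := by
      rw [hF, Finset.sum_filter, hP, Finset.sum_product]
    have e3 : ∑ p ∈ F, x p.1 p.2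
        = ∑ q ∈ Icc 1 Q, ∑ p ∈ F.filter (fun p => g p = q), x p.1 p.2 :=
      (Finset.sum_fiberwise_of_maps_to hmaps _).symm
    have hfib : ∀ q ∈ Icc 1 Q,
        (∑ p ∈ F.filter (fun p => g p = q), x p.1 p.2) ≤ ((q * t : ℕ):ℝ) * n := by
      intro q hq
      obtain ⟨hq1, hqQ⟩ := mem_Icc.mp hq
      have hqtn : q * t ≤ n := le_trans (Nat.mul_le_mul_right t hqQ) hQt
      have hqt1 : 1 ≤ q * t := le_trans hq1 (Nat.le_mul_of_pos_right q ht0)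
      have hsub : F.filter (fun p => g p = q) ⊆ Icc 1 (q * t) ×ˢ Ioc (q * t) n := by
        intro p hp
        rw [mem_filter] at hp
        obtain ⟨hpF, hpq⟩ := hp
        obtain ⟨ha, hb, _, _⟩ := hqfacts p hpF
        rw [hpq] at ha hb
        simp only [hF, mem_filter, hP, mem_product, mem_Icc] at hpF
        exact mem_product.mpr ⟨mem_Icc.mpr ⟨hpF.1.1.1, ha⟩, mem_Ioc.mpr ⟨hb, hpF.1.2.2⟩⟩
      have hnonneg : ∀ p ∈ Icc 1 (q * t) ×ˢ Ioc (q * t) n, 0 ≤ x p.1 p.2 := by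
        intro p hp
        rw [mem_product, mem_Icc, mem_Ioc] at hp
        exact h7 p.1 (mem_Icc.mpr ⟨hp.1.1, le_trans hp.1.2 hqtn⟩)
          p.2 (mem_Icc.mpr ⟨le_trans hqt1 (le_of_lt hp.2.1), hp.2.2⟩)
      calc (∑ p ∈ F.filter (fun p => g p = q), x p.1 p.2)
          ≤ ∑ p ∈ Icc 1 (q * t) ×ˢ Ioc (q * t) n, x p.1 p.2 :=
            sum_le_sum_of_subset_of_nonneg hsub (fun p hp _ => hnonneg p hp)
        _ = ∑ i ∈ Icc 1 (q * t), ∑ j ∈ Ioc (q * t) n, x i j := Finset.sum_product _ _ _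
        _ ≤ ((q * t : ℕ):ℝ) * n := hcut (q * t) (mem_Icc.mpr ⟨hqt1, hqtn⟩)
    rw [e2, e3]
    calc (∑ q ∈ Icc 1 Q, ∑ p ∈ F.filter (fun p => g p = q), x p.1 p.2)
        ≤ ∑ q ∈ Icc 1 Q, ((q * t : ℕ):ℝ) * n := sum_le_sum hfib
      _ ≤ ∑ _q ∈ Icc 1 Q, (n:ℝ) * n := by
          apply sum_le_sum
          intro q hq
          have hqQ := (mem_Icc.mp hq).2
          have : q * t ≤ n := le_trans (Nat.mul_le_mul_right t hqQ) hQt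
          have h' : ((q * t : ℕ):ℝ) ≤ (n:ℝ) := by exact_mod_cast this
          nlinarith [hn1]
      _ = (Q:ℝ) * ((n:ℝ) * n) := by
          rw [sum_const, Nat.card_Icc]
          simp [nsmul_eq_mul]
  -- put it together
  have hnt : (n:ℝ) * ((t:ℝ) * k) ≤ 2 * (n:ℝ)^2 * s := by
    have hts : (t:ℝ) * s ≤ 2 * n := by
      rw [show (2:ℝ) * (n:ℝ) / s = 2 * n / s from rfl] at htub
      calc (t:ℝ) * s ≤ (2 * n / s) * s := by
            apply mul_le_mul_of_nonneg_right htub (le_of_lt hs0)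
        _ = 2 * n := by field_simp
    calc (n:ℝ) * ((t:ℝ) * k) = (n:ℝ) * (((t:ℝ) * s) * s) := by rw [← hss]; ring
      _ ≤ (n:ℝ) * ((2 * n) * s) := by
          apply mul_le_mul_of_nonneg_left _ (by linarith)
          apply mul_le_mul_of_nonneg_right hts (le_of_lt hs0)
      _ = 2 * (n:ℝ)^2 * s := by ring
  have hQn : (Q:ℝ) * ((n:ℝ) * n) ≤ (n:ℝ)^2 * s := by
    have h := mul_le_mul_of_nonneg_right hQs
      (mul_nonneg (by linarith : (0:ℝ) ≤ (n:ℝ)) (by linarith : (0:ℝ) ≤ (n:ℝ)))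
    nlinarith [h]
  calc (∑ i ∈ Icc 1 n, ∑ j ∈ Icc 1 n, z i j)
      ≤ (∑ i ∈ Icc 1 n, ∑ j ∈ Icc 1 n, (if i < j ∧ j ≤ i + t then k else 0))
        + ∑ i ∈ Icc 1 n, ∑ j ∈ Icc 1 n, (if i + t < j then x i j else 0) := hmain
    _ ≤ (n:ℝ) * ((t:ℝ) * k) + (Q:ℝ) * ((n:ℝ) * n) := add_le_add hnear hfar
    _ ≤ 2 * (n:ℝ)^2 * s + (n:ℝ)^2 * s := add_le_add hnt hQn
    _ = 3 * (n:ℝ)^2 * s := by ring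
end

section
/- Let n ≥ 3 be an integer and p a natural number with (3/2)^p ≥ n. Let f(p) = 3^{p+1}/(2·3^{p+1} − 2^{p+1}), t_0 = n^{f(p)}, and t_i = t_0^{2 − (2/3)^i} for i = 0, 1, …, p+1. Then ∑_{i=1}^{p+1} n² · t_i^{3/2}/t_{i−1} + n² · t_0 = (p + 2) · n^{2 + f(p)}, and n^{2 + f(p)} < 2 · n^{5/2}. -/
lemma pow_aux (p : ℕ) : ((p : ℝ) + 2) * 2 ^ p < 6 * 3 ^ p := by
  induction p with
  | zero => norm_num
  | succ k ih =>
    have h2 : (0:ℝ) < 2 ^ k := by positivity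
    push_cast
    calc ((k:ℝ) + 1 + 2) * 2 ^ (k + 1) = 2 * (((k:ℝ) + 3) * 2 ^ k) := by ring
      _ ≤ 3 * (((k:ℝ) + 2) * 2 ^ k) := by nlinarith [Nat.cast_nonneg (α := ℝ) k]
      _ < 3 * (6 * 3 ^ k) := by nlinarith
      _ = 6 * 3 ^ (k + 1) := by ring

/-- For `n ≥ 3` and natural `p` with `(3/2)^p ≥ n`, setting
`f = 3^{p+1}/(2·3^{p+1} − 2^{p+1})`, `t0 = n^f` and `t i = t0^{2 − (2/3)^i}`, one has
`∑_{i=1}^{p+1} n² · t i^{3/2}/t (i−1) + n² · t0 = (p+2) · n^{2+f}` and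
`n^{2+f} < 2 · n^{5/2}`. -/
theorem runtime_bound (n : ℕ) (hn : 3 ≤ n) (p : ℕ)
    (hp : (n : ℝ) ≤ (3 / 2 : ℝ) ^ p)
    (f : ℝ) (hf : f = (3 : ℝ) ^ (p + 1) / (2 * 3 ^ (p + 1) - 2 ^ (p + 1)))
    (t0 : ℝ) (ht0 : t0 = (n : ℝ) ^ f)
    (t : ℕ → ℝ) (ht : ∀ i : ℕ, t i = t0 ^ ((2 : ℝ) - (2 / 3 : ℝ) ^ i)) :
    (∑ i ∈ Finset.Icc 1 (p + 1), (n : ℝ) ^ 2 * t i ^ (3 / 2 : ℝ) / t (i - 1)) +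
        (n : ℝ) ^ 2 * t0 = ((p : ℝ) + 2) * (n : ℝ) ^ ((2 : ℝ) + f) ∧
      (n : ℝ) ^ ((2 : ℝ) + f) < 2 * (n : ℝ) ^ ((5 : ℝ) / 2) := by
  have hn1 : (1:ℝ) < (n:ℝ) := by
    have : (3:ℝ) ≤ (n:ℝ) := by exact_mod_cast hn
    linarith
  have hn0 : (0:ℝ) < (n:ℝ) := by linarith
  have ht0pos : 0 < t0 := ht0 ▸ Real.rpow_pos_of_pos hn0 f
  have hbase : (n:ℝ) ^ 2 * t0 = (n:ℝ) ^ ((2:ℝ) + f) := by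
    rw [ht0, ← Real.rpow_natCast (n:ℝ) 2, ← Real.rpow_add hn0]
    norm_num
  constructor
  · have key : ∀ i ∈ Finset.Icc 1 (p+1),
        (n:ℝ) ^ 2 * t i ^ (3/2 : ℝ) / t (i-1) = (n:ℝ) ^ ((2:ℝ) + f) := by
      intro i hi
      obtain ⟨hi1, _⟩ := Finset.mem_Icc.mp hi
      obtain ⟨j, rfl⟩ := Nat.exists_eq_add_of_le hi1
      have hsub : 1 + j - 1 = j := by omega
      have h1 : t (1 + j) ^ (3/2 : ℝ)
          = t0 ^ (((2:ℝ) - (2/3:ℝ) ^ (1+j)) * (3/2 : ℝ)) := by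
        rw [ht (1 + j), ← Real.rpow_mul ht0pos.le]
      have h2 : t0 ^ (((2:ℝ) - (2/3:ℝ) ^ (1+j)) * (3/2 : ℝ)) / t j
          = t0 ^ ((((2:ℝ) - (2/3:ℝ) ^ (1+j)) * (3/2 : ℝ)) - ((2:ℝ) - (2/3:ℝ) ^ j)) := by
        rw [ht j, ← Real.rpow_sub ht0pos]
      have h3 : (((2:ℝ) - (2/3:ℝ) ^ (1+j)) * (3/2 : ℝ)) - ((2:ℝ) - (2/3:ℝ) ^ j) = 1 := by
        rw [pow_add, pow_one]; ring
      rw [hsub, mul_div_assoc, h1, h2, h3, Real.rpow_one, hbase]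
    rw [Finset.sum_congr rfl key, Finset.sum_const, Nat.card_Icc, hbase,
      nsmul_eq_mul]
    push_cast
    ring_nf
  · have hD : (0:ℝ) < 2 * 3 ^ (p + 1) - 2 ^ (p + 1) := by
      have : (2:ℝ) ^ (p+1) < 3 ^ (p+1) := by
        apply pow_lt_pow_left₀ (by norm_num) (by norm_num)
        omega
      have h3 : (0:ℝ) < (3:ℝ) ^ (p+1) := by positivity
      linarith
    have hx : f - 1/2 = 2 ^ p / (2 * 3 ^ (p + 1) - 2 ^ (p + 1)) := by
      rw [hf]
      rw [eq_div_iff hD.ne', sub_mul, div_mul_cancel₀ _ hD.ne']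
      rw [pow_succ, pow_succ]
      ring
    have hxpos : 0 < f - 1/2 := by
      rw [hx]; positivity
    have hlogn : Real.log n ≤ p * (1/2 : ℝ) := by
      have h1 : Real.log n ≤ Real.log ((3/2:ℝ) ^ p) := by
        apply Real.log_le_log hn0 hp
      rw [Real.log_pow] at h1
      have h2 : Real.log (3/2 : ℝ) < 1/2 := by
        have := Real.log_lt_sub_one_of_pos (x := (3/2:ℝ)) (by norm_num) (by norm_num)
        linarith
      calc Real.log n ≤ p * Real.log (3/2:ℝ) := h1
        _ ≤ p * (1/2:ℝ) := by
            apply mul_le_mul_of_nonneg_left h2.le (Nat.cast_nonneg p)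
    have hkey : (f - 1/2) * Real.log n < Real.log 2 := by
      have hlog2 : (1/2 : ℝ) < Real.log 2 := by
        have := Real.log_two_gt_d9
        linarith
      have step1 : (f - 1/2) * Real.log n ≤ (f - 1/2) * (p * (1/2:ℝ)) :=
        mul_le_mul_of_nonneg_left hlogn hxpos.le
      have step2 : (f - 1/2) * (p * (1/2:ℝ)) < 1/2 := by
        rw [hx, div_mul_eq_mul_div, div_lt_iff₀ hD]
        have hp2 : ((p:ℝ) + 2) * 2 ^ p < 6 * 3 ^ p := pow_aux p
        have e1 : (2:ℝ) ^ (p+1) = 2 * 2 ^ p := by ring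
        have e2 : (3:ℝ) ^ (p+1) = 3 * 3 ^ p := by ring
        nlinarith [pow_pos (show (0:ℝ) < 2 by norm_num) p]
      linarith
    have hlt2 : (n:ℝ) ^ (f - 1/2 : ℝ) < 2 := by
      rw [Real.rpow_def_of_pos hn0, mul_comm]
      calc Real.exp ((f - 1/2) * Real.log n) < Real.exp (Real.log 2) :=
        Real.exp_lt_exp.mpr hkey
        _ = 2 := Real.exp_log (by norm_num)
    have hsplit : (n:ℝ) ^ ((2:ℝ) + f) = (n:ℝ) ^ ((5:ℝ)/2) * (n:ℝ) ^ (f - 1/2 : ℝ) := by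
      rw [← Real.rpow_add hn0]
      congr 1
      ring
    rw [hsplit]
    have h52 : (0:ℝ) < (n:ℝ) ^ ((5:ℝ)/2) := Real.rpow_pos_of_pos hn0 _
    nlinarith
end
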